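/- Let a, b, d, e ∈ ℂ with Re(d+e−a−b−1) > 0 and Re(a−e+1) > 0, and assume none of d, e, b, d−a, b−e+1 is a nonpositive integer. For n ∈ ℕ define S(n) := [(b)_n (d−a)_n / ((d)_n (b−e+1)_n)] · ∑_{k=0}^∞ (a)_k (b+n)_k (1)_k / ((d+n)_k (e)_k · k!). Then for every n ∈ ℕ the defining series converges absolutely and S(n+1) − S(n) = −(e−1)(d−a)_n (b)_n / ((e−b−1)(d)_n (b−e+2)_n). -/

import Mathlib

open Complex Filter Finset Topology

/-- Pochhammer symbol `(a)_k = a (a+1) ⋯ (a+k-1)`. -/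
noncomputable def poch (a : ℂ) (k : ℕ) : ℂ := ∏ i ∈ Finset.range k, (a + i)

/-- "not a nonpositive integer" -/
def NP (x : ℂ) : Prop := ∀ m : ℕ, x ≠ -(m : ℂ)

lemma poch_zero (x : ℂ) : poch x 0 = 1 := by simp [poch]

lemma poch_succ (x : ℂ) (k : ℕ) : poch x (k + 1) = poch x k * (x + k) :=
  Finset.prod_range_succ _ _

lemma poch_ne_zero {x : ℂ} (hx : NP x) (k : ℕ) : poch x k ≠ 0 := by
  refine Finset.prod_ne_zero_iff.2 fun i _ => ?_
  intro h0
  exact hx i (by linear_combination h0)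

lemma poch_one_eq (k : ℕ) : poch 1 k = (Nat.factorial k : ℂ) := by
  induction k with
  | zero => simp [poch]
  | succ n ih => rw [poch_succ, ih, Nat.factorial_succ]; push_cast; ring

lemma poch_shift (x : ℂ) (k : ℕ) : poch (x + 1) k * x = poch x k * (x + k) := by
  induction k with
  | zero => simp [poch]
  | succ n ih =>
    rw [poch_succ, poch_succ]
    push_cast
    linear_combination (x + 1 + n) * ih

lemma NP.add_nat {x : ℂ} (hx : NP x) (n : ℕ) : NP (x + n) := by
  intro m hm
  exact hx (m + n) (by push_cast; linear_combination hm)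

lemma NP.succ {x : ℂ} (hx : NP x) : NP (x + 1) := by
  have := hx.add_nat 1
  simpa using this

lemma NP.ne_zero {x : ℂ} (hx : NP x) : x ≠ 0 := by
  have := hx 0
  simpa using this

lemma gammaSeq_ne_zero {x : ℂ} (hx : NP x) {n : ℕ} (hn : 1 ≤ n) :
    Complex.GammaSeq x n ≠ 0 := by
  have hn0 : (n : ℂ) ≠ 0 := Nat.cast_ne_zero.2 (by omega)
  have h1 : (n : ℂ) ^ x ≠ 0 := by
    simp [Complex.cpow_def, hn0, Complex.exp_ne_zero]
  have h2 : (Nat.factorial n : ℂ) ≠ 0 := Nat.cast_ne_zero.2 (Nat.factorial_ne_zero n)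
  rw [Complex.GammaSeq]
  exact div_ne_zero (mul_ne_zero h1 h2)
    (by rw [show (∏ j ∈ Finset.range (n+1), (x + j)) = poch x (n+1) from rfl]
        exact poch_ne_zero hx _)

lemma poch_eq_gammaSeq {x : ℂ} (hx : NP x) {n : ℕ} (hn : 1 ≤ n) :
    poch x (n + 1) = (n : ℂ) ^ x * (Nat.factorial n : ℂ) / Complex.GammaSeq x n := by
  rw [eq_div_iff (gammaSeq_ne_zero hx hn)]
  rw [show Complex.GammaSeq x n = (n : ℂ) ^ x * (Nat.factorial n : ℂ) / poch x (n + 1) from rfl]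
  field_simp [poch_ne_zero hx]

section Est

variable {a' b' c' d' : ℂ}

/-- The key representation of `U (n+1)` via GammaSeq. -/
lemma U_rep (ha : NP a') (hb : NP b') (hc : NP c') (hd : NP d') {n : ℕ} (hn : 1 ≤ n) :
    poch a' (n + 1) * poch b' (n + 1) / (poch c' (n + 1) * poch d' (n + 1)) =
      (n : ℂ) ^ (a' + b' - c' - d') *
        (Complex.GammaSeq c' n * Complex.GammaSeq d' n /
          (Complex.GammaSeq a' n * Complex.GammaSeq b' n)) := by
  have hn0 : (n : ℂ) ≠ 0 := Nat.cast_ne_zero.2 (by omega)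
  rw [poch_eq_gammaSeq ha hn, poch_eq_gammaSeq hb hn, poch_eq_gammaSeq hc hn,
    poch_eq_gammaSeq hd hn]
  rw [Complex.cpow_sub _ _ hn0, Complex.cpow_sub _ _ hn0, Complex.cpow_add _ _ hn0]
  have hf : (Nat.factorial n : ℂ) ≠ 0 := Nat.cast_ne_zero.2 (Nat.factorial_ne_zero n)
  have hpa : (n : ℂ) ^ a' ≠ 0 := by simp [Complex.cpow_def, hn0, Complex.exp_ne_zero]
  have hpb : (n : ℂ) ^ b' ≠ 0 := by simp [Complex.cpow_def, hn0, Complex.exp_ne_zero]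
  have hpc : (n : ℂ) ^ c' ≠ 0 := by simp [Complex.cpow_def, hn0, Complex.exp_ne_zero]
  have hpd : (n : ℂ) ^ d' ≠ 0 := by simp [Complex.cpow_def, hn0, Complex.exp_ne_zero]
  field_simp [gammaSeq_ne_zero ha hn, gammaSeq_ne_zero hb hn, gammaSeq_ne_zero hc hn,
    gammaSeq_ne_zero hd hn]

/-- Bound: there exists `C` such that `‖U (n+1)‖ ≤ C * n ^ (Re (a'+b'-c'-d'))` for `n ≥ 1`. -/
lemma U_bound (ha : NP a') (hb : NP b') (hc : NP c') (hd : NP d') :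
    ∃ C : ℝ, ∀ n : ℕ, 1 ≤ n →
      ‖poch a' (n + 1) * poch b' (n + 1) / (poch c' (n + 1) * poch d' (n + 1))‖ ≤
        C * (n : ℝ) ^ (a' + b' - c' - d').re := by
  set R : ℕ → ℂ := fun n => Complex.GammaSeq c' n * Complex.GammaSeq d' n /
      (Complex.GammaSeq a' n * Complex.GammaSeq b' n) with hR
  have hΓ : (Complex.Gamma a' * Complex.Gamma b') ≠ 0 :=
    mul_ne_zero (Complex.Gamma_ne_zero ha) (Complex.Gamma_ne_zero hb)
  have hlim : Tendsto R atTop (𝓝 (Complex.Gamma c' * Complex.Gamma d' /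
      (Complex.Gamma a' * Complex.Gamma b'))) :=
    (((Complex.GammaSeq_tendsto_Gamma c').mul (Complex.GammaSeq_tendsto_Gamma d')).div
      (((Complex.GammaSeq_tendsto_Gamma a').mul (Complex.GammaSeq_tendsto_Gamma b'))) hΓ)
  obtain ⟨C, hC⟩ := (hlim.norm.bddAbove_range)
  refine ⟨C, fun n hn => ?_⟩
  have hCn : ∀ m, ‖R m‖ ≤ C := fun m => hC (Set.mem_range_self m)
  rw [U_rep ha hb hc hd hn, norm_mul]
  have hpos : (0 : ℝ) < (n : ℝ) := by exact_mod_cast hn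
  have hnorm : ‖(n : ℂ) ^ (a' + b' - c' - d')‖ = (n : ℝ) ^ (a' + b' - c' - d').re := by
    rw [show ((n : ℂ)) = (((n : ℝ) : ℂ)) by push_cast; rfl]
    rw [Complex.norm_cpow_eq_rpow_re_of_pos hpos]
  rw [hnorm, mul_comm C _]
  exact mul_le_mul_of_nonneg_left (hCn n) (Real.rpow_nonneg hpos.le _)

end Est

section Main

lemma main_est {a' b' c' d' : ℂ} (hb : NP b') (hc : NP c') (hd : NP d')
    (hre : 1 < (c' + d' - a' - b').re) (x : ℂ) :
    (Summable fun k : ℕ => ‖poch a' k * poch b' k / (poch c' k * poch d' k)‖) ∧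
      Tendsto (fun k : ℕ => (x + k) * (poch a' k * poch b' k / (poch c' k * poch d' k)))
        atTop (𝓝 0) := by
  set U : ℕ → ℂ := fun k => poch a' k * poch b' k / (poch c' k * poch d' k) with hU
  by_cases ha : NP a'
  · -- non-terminating case
    obtain ⟨C, hC⟩ := U_bound ha hb hc hd
    set s : ℝ := (a' + b' - c' - d').re with hs
    have hslt : s < -1 := by
      have : (a' + b' - c' - d').re = -(c' + d' - a' - b').re := by
        simp [Complex.add_re, Complex.sub_re]; ring
      rw [hs, this]; linarith
    constructor
    · rw [← summable_nat_add_iff 2]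
      have hbnd : ∀ n : ℕ, ‖U (n + 2)‖ ≤ C * (((n + 1 : ℕ)) : ℝ) ^ s := by
        intro n
        exact hC (n + 1) (by omega)
      refine Summable.of_nonneg_of_le (fun n => norm_nonneg _) hbnd ?_
      have h1 : Summable fun n : ℕ => ((n : ℝ)) ^ s := Real.summable_nat_rpow.2 hslt
      have h2 : Summable fun n : ℕ => (((n + 1 : ℕ)) : ℝ) ^ s := by
        exact_mod_cast (summable_nat_add_iff 1).2 h1
      exact h2.mul_left C
    · rw [← tendsto_add_atTop_iff_nat 2]
      rw [show (0 : ℂ) = 0 from rfl]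
      apply tendsto_zero_iff_norm_tendsto_zero.2
      have key : ∀ n : ℕ, ‖(x + ((n + 2 : ℕ) : ℂ)) * U (n + 2)‖ ≤
          (C * (‖x‖ + 2)) * ((n + 1 : ℝ)) ^ (s + 1) := by
        intro n
        have hpos : (0 : ℝ) < (n + 1 : ℝ) := by positivity
        have h1 : ‖(x + ((n + 2 : ℕ) : ℂ))‖ ≤ (‖x‖ + 2) * (n + 1 : ℝ) := by
          calc ‖(x + ((n + 2 : ℕ) : ℂ))‖ ≤ ‖x‖ + ‖((n + 2 : ℕ) : ℂ)‖ := norm_add_le _ _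
            _ = ‖x‖ + (n + 2 : ℝ) := by
                rw [show ((n + 2 : ℕ) : ℂ) = (((n + 2 : ℝ)) : ℂ) by push_cast; ring]
                rw [Complex.norm_real, Real.norm_of_nonneg (by positivity)]
            _ ≤ (‖x‖ + 2) * (n + 1 : ℝ) := by nlinarith [norm_nonneg x]
        have h2 : ‖U (n + 2)‖ ≤ C * ((n + 1 : ℝ)) ^ s := by
          have h := hC (n + 1) (by omega)
          rw [Nat.cast_add, Nat.cast_one] at h
          exact h
        calc ‖(x + ((n + 2 : ℕ) : ℂ)) * U (n + 2)‖
            = ‖(x + ((n + 2 : ℕ) : ℂ))‖ * ‖U (n + 2)‖ := norm_mul _ _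
          _ ≤ ((‖x‖ + 2) * (n + 1 : ℝ)) * (C * ((n + 1 : ℝ)) ^ s) := by
              apply mul_le_mul h1 h2 (norm_nonneg _) (by positivity)
          _ = (C * (‖x‖ + 2)) * (((n + 1 : ℝ)) ^ s * (n + 1 : ℝ)) := by ring
          _ = (C * (‖x‖ + 2)) * ((n + 1 : ℝ)) ^ (s + 1) := by
              rw [Real.rpow_add_one hpos.ne']
      refine squeeze_zero (fun n => norm_nonneg _) key ?_
      have hneg : s + 1 < 0 := by linarith
      have h3 : Tendsto (fun y : ℝ => y ^ (s + 1)) atTop (𝓝 0) := by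
        have := tendsto_rpow_neg_atTop (y := -(s + 1)) (by linarith)
        simpa using this
      have h4 : Tendsto (fun n : ℕ => (n + 1 : ℝ)) atTop atTop :=
        tendsto_atTop_add_const_right _ 1 tendsto_natCast_atTop_atTop
      have := (h3.comp h4).const_mul (C * (‖x‖ + 2))
      simpa using this
  · -- terminating case: a' = -m for some m, so U k = 0 for k ≥ m + 1
    have ha2 : ∃ m : ℕ, a' = -(m : ℂ) := by
      by_contra hcon
      push_neg at hcon
      exact ha hcon
    obtain ⟨m, hm⟩ := ha2
    have hpz : ∀ k, m + 1 ≤ k → poch a' k = 0 := by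
      intro k hk
      apply Finset.prod_eq_zero (Finset.mem_range.2 (by omega : m < k))
      rw [hm]; ring
    constructor
    · apply summable_of_ne_finset_zero (s := Finset.range (m + 1))
      intro k hk
      rw [Finset.mem_range, not_lt] at hk
      simp [hpz k hk]
    · apply Tendsto.congr' _ tendsto_const_nhds
      filter_upwards [eventually_ge_atTop (m + 1)] with k hk
      simp [hpz k hk]

end Main

lemma tele {v : ℕ → ℂ} (hs : Summable fun k => v k - v (k + 1))
    (hv : Tendsto v atTop (𝓝 0)) : ∑' k : ℕ, (v k - v (k + 1)) = v 0 := by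
  have h1 : Tendsto (fun n : ℕ => ∑ k ∈ Finset.range n, (v k - v (k + 1))) atTop
      (𝓝 (∑' k : ℕ, (v k - v (k + 1)))) := hs.hasSum.tendsto_sum_nat
  have h2 : Tendsto (fun n : ℕ => ∑ k ∈ Finset.range n, (v k - v (k + 1))) atTop (𝓝 (v 0)) := by
    have heq : ∀ n : ℕ, ∑ k ∈ Finset.range n, (v k - v (k + 1)) = v 0 - v n := fun n =>
      Finset.sum_range_sub' v n
    simp only [heq]
    simpa using tendsto_const_nhds.sub hv
  exact tendsto_nhds_unique h1 h2

lemma ser {a' β δ e' : ℂ} (hβ : NP β) (hδ : NP δ) (he : NP e')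
    (hre : 1 < (δ + e' - a' - β).re) :
    β * (δ - a') *
        (∑' k : ℕ, poch a' k * poch (β + 1) k / (poch (δ + 1) k * poch e' k)) -
      (β - e' + 1) * δ * (∑' k : ℕ, poch a' k * poch β k / (poch δ k * poch e' k)) =
        (e' - 1) * δ := by
  set U : ℕ → ℂ := fun k => poch a' k * poch β k / (poch δ k * poch e' k) with hUdef
  set U' : ℕ → ℂ := fun k => poch a' k * poch (β + 1) k / (poch (δ + 1) k * poch e' k) with hU'def
  set v : ℕ → ℂ := fun k => δ * ((e' - 1 + k) * U k) with hvdef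
  have hre' : 1 < ((δ + 1) + e' - a' - (β + 1)).re := by
    have : (δ + 1) + e' - a' - (β + 1) = δ + e' - a' - β := by ring
    rw [this]; exact hre
  obtain ⟨hUsum, hUtend⟩ := main_est (a' := a') hβ hδ he hre (e' - 1)
  obtain ⟨hU'sum, -⟩ := main_est (a' := a') hβ.succ hδ.succ he hre' 0
  have hterm : ∀ k : ℕ, β * (δ - a') * U' k - (β - e' + 1) * δ * U k = v k - v (k + 1) := by
    intro k
    have h1 : poch (β + 1) k * β = poch β k * (β + k) := poch_shift β k
    have h2 : poch (δ + 1) k * δ = poch δ k * (δ + k) := poch_shift δ k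
    have hδk : δ + k ≠ 0 := by
      intro h0
      exact hδ k (by linear_combination h0)
    have hek : e' + k ≠ 0 := by
      intro h0
      exact he k (by linear_combination h0)
    have hβ0 : β ≠ 0 := hβ.ne_zero
    have hδ0 : δ ≠ 0 := hδ.ne_zero
    have hpδ : poch δ k ≠ 0 := poch_ne_zero hδ k
    have hpe : poch e' k ≠ 0 := poch_ne_zero he k
    have hpδ1 : poch (δ + 1) k ≠ 0 := poch_ne_zero hδ.succ k
    have hcast : ((k + 1 : ℕ) : ℂ) = (k : ℂ) + 1 := by push_cast; ring
    have hU'eq : U' k = (poch a' k * poch β k * (β + ↑k) * δ) /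
        (β * poch δ k * (δ + ↑k) * poch e' k) := by
      rw [hU'def]
      simp only []
      rw [div_eq_div_iff (mul_ne_zero hpδ1 hpe)
        (by exact mul_ne_zero (mul_ne_zero (mul_ne_zero hβ0 hpδ) hδk) hpe)]
      linear_combination (poch a' k * poch δ k * (δ + ↑k) * poch e' k) * h1 -
        (poch a' k * poch β k * (β + ↑k) * poch e' k) * h2
    simp only [hvdef, hUdef, poch_succ, hcast]
    rw [hU'eq]
    simp only [← mul_div_assoc]
    have hDL1 : β * poch δ k * (δ + (k : ℂ)) * poch e' k ≠ 0 :=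
      mul_ne_zero (mul_ne_zero (mul_ne_zero hβ0 hpδ) hδk) hpe
    have hDL2 : poch δ k * poch e' k ≠ 0 := mul_ne_zero hpδ hpe
    have hDR2 : poch δ k * (δ + (k : ℂ)) * (poch e' k * (e' + (k : ℂ))) ≠ 0 :=
      mul_ne_zero (mul_ne_zero hpδ hδk) (mul_ne_zero hpe hek)
    rw [div_sub_div _ _ hDL1 hDL2, div_sub_div _ _ hDL2 hDR2,
      div_eq_div_iff (mul_ne_zero hDL1 hDL2) (mul_ne_zero hDL2 hDR2)]
    ring
  have hc1 : Summable fun k => β * (δ - a') * U' k := (hU'sum.of_norm).mul_left _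
  have hc2 : Summable fun k => (β - e' + 1) * δ * U k := (hUsum.of_norm).mul_left _
  have hstel : Summable fun k => v k - v (k + 1) := by
    apply Summable.congr (hc1.sub hc2)
    intro k
    exact hterm k
  have hvt : Tendsto v atTop (𝓝 0) := by
    have := hUtend.const_mul δ
    simpa using this
  have htel := tele hstel hvt
  have hv0 : v 0 = (e' - 1) * δ := by
    simp [hvdef, hUdef, poch_zero]
    ring
  calc β * (δ - a') * (∑' k, U' k) - (β - e' + 1) * δ * (∑' k, U k)
      = (∑' k, β * (δ - a') * U' k) - ∑' k, (β - e' + 1) * δ * U k := by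
        rw [tsum_mul_left, tsum_mul_left]
    _ = ∑' k, (β * (δ - a') * U' k - (β - e' + 1) * δ * U k) := (Summable.tsum_sub hc1 hc2).symm
    _ = ∑' k, (v k - v (k + 1)) := tsum_congr hterm
    _ = v 0 := htel
    _ = (e' - 1) * δ := hv0

/-- The normalized sum `S(n)` of Section 5. -/
noncomputable def S5 (a b d e : ℂ) (n : ℕ) : ℂ :=
  poch b n * poch (d - a) n / (poch d n * poch (b - e + 1) n) *
    ∑' k : ℕ, poch a k * poch (b + n) k * poch 1 k /
      (poch (d + n) k * poch e k * (Nat.factorial k : ℂ))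

set_option maxHeartbeats 2000000 in
theorem section5_S_difference (a b d e : ℂ)
    (hre1 : 0 < (d + e - a - b - 1).re) (hre2 : 0 < (a - e + 1).re)
    (h : ∀ z ∈ [d, e, b, d - a, b - e + 1], ∀ m : ℕ, z ≠ -(m : ℂ)) :
    ∀ n : ℕ,
      (Summable fun k : ℕ =>
        ‖poch a k * poch (b + n) k * poch 1 k /
          (poch (d + n) k * poch e k * (Nat.factorial k : ℂ))‖) ∧
      S5 a b d e (n + 1) - S5 a b d e n =
        -((e - 1) * poch (d - a) n * poch b n /
          ((e - b - 1) * poch d n * poch (b - e + 2) n)) := by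
  intro n
  have hd : NP d := fun m => h d (by simp) m
  have he : NP e := fun m => h e (by simp) m
  have hb : NP b := fun m => h b (by simp) m
  have hda : NP (d - a) := fun m => h (d - a) (by simp) m
  have hbe : NP (b - e + 1) := fun m => h (b - e + 1) (by simp) m
  have hβ : NP (b + n) := hb.add_nat n
  have hδ : NP (d + n) := hd.add_nat n
  have hre : 1 < ((d + n) + e - a - (b + n)).re := by
    have heq : (d + (n : ℂ)) + e - a - (b + n) = (d + e - a - b - 1) + 1 := by ring
    rw [heq]
    rw [Complex.add_re, Complex.one_re]
    linarith
  have hfac : ∀ k : ℕ, (Nat.factorial k : ℂ) ≠ 0 := fun k =>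
    Nat.cast_ne_zero.2 (Nat.factorial_ne_zero k)
  have hsummand : ∀ (m : ℕ) (k : ℕ), poch a k * poch (b + m) k * poch 1 k /
      (poch (d + m) k * poch e k * (Nat.factorial k : ℂ)) =
      poch a k * poch (b + m) k / (poch (d + m) k * poch e k) := by
    intro m k
    rw [poch_one_eq]
    exact mul_div_mul_right _ _ (hfac k)
  refine ⟨?_, ?_⟩
  · refine (summable_congr fun k => ?_).mpr (main_est (a' := a) hβ hδ he hre 0).1
    rw [hsummand n k]
  · have key := ser (a' := a) hβ hδ he hre
    set Sig0 : ℂ := ∑' k : ℕ, poch a k * poch (b + n) k / (poch (d + n) k * poch e k) with hSig0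
    set Sig1 : ℂ := ∑' k : ℕ,
      poch a k * poch ((b + n) + 1) k / (poch ((d + n) + 1) k * poch e k) with hSig1
    have hS0 : S5 a b d e n =
        poch b n * poch (d - a) n / (poch d n * poch (b - e + 1) n) * Sig0 := by
      rw [S5, hSig0]
      congr 1
      exact tsum_congr fun k => hsummand n k
    have hS1 : S5 a b d e (n + 1) =
        poch b (n + 1) * poch (d - a) (n + 1) / (poch d (n + 1) * poch (b - e + 1) (n + 1)) *
          Sig1 := by
      rw [S5, hSig1]
      congr 1
      refine tsum_congr fun k => ?_
      rw [hsummand (n + 1) k]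
      have c1 : b + ((n + 1 : ℕ) : ℂ) = (b + n) + 1 := by push_cast; ring
      have c2 : d + ((n + 1 : ℕ) : ℂ) = (d + n) + 1 := by push_cast; ring
      rw [c1, c2]
    rw [hS0, hS1]
    -- nonzero facts
    have hpd : poch d n ≠ 0 := poch_ne_zero hd n
    have hpbe : poch (b - e + 1) n ≠ 0 := poch_ne_zero hbe n
    have hb0 : b + (n : ℂ) ≠ 0 := hβ.ne_zero
    have hd0 : d + (n : ℂ) ≠ 0 := hδ.ne_zero
    have hda0 : d + (n : ℂ) - a ≠ 0 := by
      intro h0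
      exact hda n (by linear_combination h0)
    have hben : b - e + 1 + (n : ℂ) ≠ 0 := by
      intro h0
      exact hbe n (by linear_combination h0)
    have hbe0 : b - e + 1 ≠ 0 := hbe.ne_zero
    have heb0 : e - b - 1 ≠ 0 := fun h0 => hbe0 (by linear_combination -h0)
    -- express poch (b-e+2) n
    have hbe2clear : poch (b - e + 2) n * (b - e + 1) = poch (b - e + 1) n * (b - e + 1 + n) := by
      have h2 := poch_shift (b - e + 1) n
      rw [show (b - e + 1) + 1 = b - e + 2 by ring] at h2
      exact h2
    have hP2 : poch (b - e + 2) n ≠ 0 := by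
      have := poch_ne_zero hbe.succ n
      rwa [show (b - e + 1) + 1 = b - e + 2 by ring] at this
    -- solve for Sig1 from key
    have hSig1eq : Sig1 = ((e - 1) * (d + n) + ((b + n) - e + 1) * (d + n) * Sig0) /
        ((b + n) * ((d + n) - a)) := by
      rw [eq_div_iff (mul_ne_zero hb0 hda0)]
      linear_combination key
    -- clean form of the RHS
    have hD1 : (e - b - 1) * poch d n * poch (b - e + 2) n ≠ 0 :=
      mul_ne_zero (mul_ne_zero heb0 hpd) hP2
    have hD2 : (e - b - 1) * poch d n * (poch (b - e + 1) n * (b - e + 1 + (n : ℂ))) ≠ 0 :=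
      mul_ne_zero (mul_ne_zero heb0 hpd) (mul_ne_zero hpbe hben)
    have hRHSeq : (e - 1) * poch (d - a) n * poch b n /
        ((e - b - 1) * poch d n * poch (b - e + 2) n) =
        (e - 1) * poch (d - a) n * poch b n * (b - e + 1) /
          ((e - b - 1) * poch d n * (poch (b - e + 1) n * (b - e + 1 + (n : ℂ)))) := by
      rw [div_eq_div_iff hD1 hD2]
      linear_combination (-((e - 1) * poch (d - a) n * poch b n * (e - b - 1) * poch d n)) *
        hbe2clear
    rw [hRHSeq, hSig1eq]
    simp only [poch_succ]
    rw [div_mul_div_comm, div_mul_eq_mul_div]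
    have hB1 : poch d n * (d + (n : ℂ)) * (poch (b - e + 1) n * (b - e + 1 + (n : ℂ))) *
        ((b + (n : ℂ)) * ((d + (n : ℂ)) - a)) ≠ 0 :=
      mul_ne_zero (mul_ne_zero (mul_ne_zero hpd hd0) (mul_ne_zero hpbe hben))
        (mul_ne_zero hb0 hda0)
    have hB2 : poch d n * poch (b - e + 1) n ≠ 0 := mul_ne_zero hpd hpbe
    rw [div_sub_div _ _ hB1 hB2, ← neg_div, div_eq_div_iff (mul_ne_zero hB1 hB2) hD2]
    ring
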